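/- Let X be a compact Hausdorff space and f ∈ C(X, ℂ) a function that is not invertible (vanishes somewhere or 0 is in the closure of its range of moduli). If u ∈ C(X, ℂ) satisfies |u(x)| = 1 for all x, then ‖f − u‖∞ ≥ 1 + dist(f, C(X)⁻¹). -/

import Mathlib

theorem stmt_11 {X : Type*} [TopologicalSpace X] [CompactSpace X] [T2Space X] [Nonempty X]
    (f : C(X, ℂ)) (hnu : ¬ IsUnit f) (u : C(X, ℂ)) (hu : ∀ x, ‖u x‖ = 1) :
    1 + Metric.infDist f {h : C(X, ℂ) | IsUnit h} ≤ ‖f - u‖ := by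
  -- first: ‖f - u‖ ≥ 1
  have hβ : (1 : ℝ) ≤ ‖f - u‖ := by
    by_contra h
    push_neg at h
    apply hnu
    rw [ContinuousMap.isUnit_iff_forall_ne_zero]
    intro x
    have h1 : ‖f x - u x‖ < 1 := lt_of_le_of_lt (by
      have := (f - u).norm_coe_le_norm x
      simpa using this) h
    intro hx
    rw [hx, zero_sub, norm_neg, hu x] at h1
    exact lt_irrefl _ h1
  have hu1 : ‖u‖ = 1 := by
    apply le_antisymm
    · exact (ContinuousMap.norm_le _ zero_le_one).2 fun x => (hu x).le
    · obtain ⟨x⟩ := ‹Nonempty X›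
      calc (1:ℝ) = ‖u x‖ := (hu x).symm
        _ ≤ ‖u‖ := u.norm_coe_le_norm x
  -- infDist ≤ ‖f - u‖ - 1 + ε for all ε > 0
  have key : Metric.infDist f {h : C(X, ℂ) | IsUnit h} ≤ ‖f - u‖ - 1 := by
    refine le_of_forall_pos_le_add fun ε hε => ?_
    set c : ℝ := ‖f - u‖ - 1 + ε with hc
    have hcpos : 0 < c := by simp only [hc]; linarith
    set g : C(X, ℂ) := (c : ℂ) • u + f with hg
    have hgu : IsUnit g := by
      rw [ContinuousMap.isUnit_iff_forall_ne_zero]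
      intro x
      have h1 : g x = (c + 1 : ℂ) * u x + (f x - u x) := by
        simp [hg]; ring
      have h2 : ‖(c + 1 : ℂ) * u x‖ = c + 1 := by
        rw [norm_mul, hu x, mul_one]
        have : ((c:ℂ) + 1) = ((c + 1 : ℝ) : ℂ) := by push_cast; ring
        rw [this, Complex.norm_real, Real.norm_eq_abs, abs_of_pos (by linarith)]
      have h3 : ‖f x - u x‖ ≤ ‖f - u‖ := by
        have := (f - u).norm_coe_le_norm x
        simpa using this
      intro hx
      have : ‖(c + 1 : ℂ) * u x‖ - ‖f x - u x‖ ≤ ‖g x‖ := by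
        have h4 := norm_sub_norm_le ((c + 1 : ℂ) * u x) (-(f x - u x))
        rw [norm_neg, sub_neg_eq_add] at h4
        rw [h1]; exact h4
      rw [hx, norm_zero, h2] at this
      have : c + 1 - ‖f - u‖ ≤ 0 := le_trans (by linarith) this
      simp only [hc] at this
      linarith
    have hdist : dist f g = c := by
      rw [dist_eq_norm]
      have : f - g = -((c:ℂ) • u) := by rw [hg]; abel
      rw [this, norm_neg, norm_smul, hu1, mul_one]
      simp [Complex.norm_real, abs_of_pos hcpos]
    calc Metric.infDist f {h : C(X, ℂ) | IsUnit h} ≤ dist f g :=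
          Metric.infDist_le_dist_of_mem hgu
      _ = c := hdist
      _ = ‖f - u‖ - 1 + ε := rfl
  linarith
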